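/- arXiv:2206.11546 — 3 statements merged into one kernel-verified Lean document; each statement's English description precedes it below -/
import Mathlib

section
/- Let r > 0, c ∈ ℝ^d nonzero, and A ∈ ℝ^{d×d} symmetric positive-definite. If r·λ_max(A^{-1}) ≤ ‖c‖², then for every x in the hyperellipsoid E(r,c,A) = {x : (x−c)ᵀA(x−c) ≤ r} with x ≠ 0, the inner product ⟨c/‖c‖, x/‖x‖⟩ is at least sqrt(1 − (r/‖c‖²)·λ_max(A^{-1})). -/
open Matrix

lemma rayleigh_lower {d : ℕ} (A : Matrix (Fin d) (Fin d) ℝ) (hApd : A.PosDef) (y : Fin d → ℝ)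
    (lam : ℝ) (hlam : ∀ i, lam ≤ hApd.1.eigenvalues i) :
    lam * (y ⬝ᵥ y) ≤ y ⬝ᵥ A.mulVec y := by
  classical
  have hH := hApd.1
  set U : Matrix (Fin d) (Fin d) ℝ := (hH.eigenvectorUnitary : Matrix (Fin d) (Fin d) ℝ) with hU
  have hUU : U * star U = 1 := (Matrix.mem_unitaryGroup_iff).mp hH.eigenvectorUnitary.2
  have hB : A - lam • (1 : Matrix (Fin d) (Fin d) ℝ)
      = U * diagonal (fun i => hH.eigenvalues i - lam) * star U := by
    have hsp := hH.spectral_theorem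
    simp only [Unitary.conjStarAlgAut_apply, Unitary.coe_star] at hsp
    have hdiag : diagonal (RCLike.ofReal ∘ hH.eigenvalues) - lam • (1 : Matrix (Fin d) (Fin d) ℝ)
        = diagonal (fun i => hH.eigenvalues i - lam) := by
      ext i j
      by_cases h : i = j <;> simp [h, Matrix.diagonal, Matrix.one_apply]
    rw [← hdiag, Matrix.mul_sub, Matrix.sub_mul, ← hsp, mul_smul_comm, mul_one, smul_mul_assoc,
      hUU]
  have hBpsd : ((A - lam • 1) : Matrix (Fin d) (Fin d) ℝ).PosSemidef := by
    rw [hB]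
    exact (Matrix.PosSemidef.diagonal
      (fun i => sub_nonneg.mpr (hlam i))).mul_mul_conjTranspose_same U
  have hkey := hBpsd.dotProduct_mulVec_nonneg y
  simp only [star_trivial, RCLike.re_to_real] at hkey
  have hmv : (A - lam • 1).mulVec y = A.mulVec y - lam • y := by
    rw [Matrix.sub_mulVec, Matrix.smul_mulVec, Matrix.one_mulVec]
  rw [hmv, dotProduct_sub, dotProduct_smul] at hkey
  simpa [smul_eq_mul] using sub_nonneg.mp hkey

/-- if `r·λ_max(A⁻¹) ≤ ‖c‖²` then every nonzero point `x` of the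
hyperellipsoid `E(r,c,A)` satisfies `⟨c/‖c‖, x/‖x‖⟩ ≥ √(1 - (r/‖c‖²)λ_max(A⁻¹))`. -/
theorem stmt_1 {d : ℕ} (r : ℝ) (hr : 0 < r) (c : Fin d → ℝ) (hc : c ≠ 0)
    (A : Matrix (Fin d) (Fin d) ℝ) (hA : A.IsSymm) (hApd : A.PosDef)
    (hrc : r * (⨅ i, hApd.1.eigenvalues i)⁻¹ ≤ c ⬝ᵥ c)
    (x : Fin d → ℝ) (hx0 : x ≠ 0) (hx : (x - c) ⬝ᵥ A.mulVec (x - c) ≤ r) :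
    Real.sqrt (1 - r / (c ⬝ᵥ c) * (⨅ i, hApd.1.eigenvalues i)⁻¹)
      ≤ (c ⬝ᵥ x) / (Real.sqrt (c ⬝ᵥ c) * Real.sqrt (x ⬝ᵥ x)) := by
  classical
  have hne : Nonempty (Fin d) := by
    by_contra h
    rw [not_nonempty_iff] at h
    exact hc (funext fun i => (h.false i).elim)
  set lam := ⨅ i, hApd.1.eigenvalues i with hlamdef
  have hlam_le : ∀ i, lam ≤ hApd.1.eigenvalues i := fun i =>
    ciInf_le (Finite.bddBelow_range _) i
  have hlam_pos : 0 < lam := by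
    obtain ⟨i, hi⟩ := Finite.exists_min hApd.1.eigenvalues
    have : lam = hApd.1.eigenvalues i :=
      le_antisymm (hlam_le i) (le_ciInf hi)
    rw [this]
    exact hApd.eigenvalues_pos i
  -- positivity of norms
  have hself : ∀ v : Fin d → ℝ, 0 ≤ v ⬝ᵥ v := fun v =>
    Finset.sum_nonneg fun i _ => mul_self_nonneg _
  have hnc2 : 0 < c ⬝ᵥ c :=
    (hself c).lt_of_ne' (fun h => hc (dotProduct_self_eq_zero.mp h))
  have hnx2 : 0 < x ⬝ᵥ x :=
    (hself x).lt_of_ne' (fun h => hx0 (dotProduct_self_eq_zero.mp h))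
  set y := x - c with hy
  have hray : lam * (y ⬝ᵥ y) ≤ y ⬝ᵥ A.mulVec y := rayleigh_lower A hApd y lam hlam_le
  have hny2 : y ⬝ᵥ y ≤ r * lam⁻¹ := by
    rw [← div_eq_mul_inv, le_div_iff₀ hlam_pos]
    nlinarith [hray.trans hx]
  -- relation between inner products
  have hexp : y ⬝ᵥ y = x ⬝ᵥ x - 2 * (c ⬝ᵥ x) + c ⬝ᵥ c := by
    simp only [hy, sub_dotProduct, dotProduct_sub]
    rw [dotProduct_comm x c]
    ring
  set s := Real.sqrt (1 - r / (c ⬝ᵥ c) * lam⁻¹) with hs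
  have harg : 0 ≤ 1 - r / (c ⬝ᵥ c) * lam⁻¹ := by
    rw [sub_nonneg, div_mul_eq_mul_div, div_le_one hnc2]
    exact hrc
  have hs2 : s ^ 2 = 1 - r / (c ⬝ᵥ c) * lam⁻¹ := Real.sq_sqrt harg
  have hs2c : s ^ 2 * (c ⬝ᵥ c) = c ⬝ᵥ c - r * lam⁻¹ := by
    rw [hs2]
    field_simp
  have hsc := Real.sq_sqrt hnc2.le
  have hsx := Real.sq_sqrt hnx2.le
  have hscpos : 0 < Real.sqrt (c ⬝ᵥ c) := Real.sqrt_pos.mpr hnc2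
  have hsxpos : 0 < Real.sqrt (x ⬝ᵥ x) := Real.sqrt_pos.mpr hnx2
  rw [le_div_iff₀ (by positivity)]
  have hs0 : 0 ≤ s := Real.sqrt_nonneg _
  nlinarith [sq_nonneg (s * Real.sqrt (c ⬝ᵥ c) - Real.sqrt (x ⬝ᵥ x)), hsc, hsx, hs2c, hny2,
    hexp, mul_pos hscpos hsxpos]
end

section
/- Let Z = (W + λ)² with W standard Gaussian and λ ≥ 0. Then for every t > 0, P(Z ≤ t²·(1+λ²)) ≤ 7^{1/4} · t. -/
set_option maxHeartbeats 4000000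


open MeasureTheory ProbabilityTheory Real

lemma gauss_icc_bound (a b M : ℝ) (hab : a ≤ b)
    (hM : ∀ x ∈ Set.Icc a b, gaussianPDFReal 0 1 x ≤ M) :
    ((gaussianReal 0 1) (Set.Icc a b)).toReal ≤ (b - a) * M := by
  rw [gaussianReal_apply_eq_integral 0 one_ne_zero]
  have hInt : 0 ≤ ∫ x in Set.Icc a b, gaussianPDFReal 0 1 x :=
    setIntegral_nonneg measurableSet_Icc fun x _ => gaussianPDFReal_nonneg 0 1 x
  rw [ENNReal.toReal_ofReal hInt]
  have h1 : ∫ x in Set.Icc a b, gaussianPDFReal 0 1 x ≤ ∫ _x in Set.Icc a b, M := by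
    apply setIntegral_mono_on
    · exact (integrable_gaussianPDFReal 0 1).integrableOn
    · refine integrableOn_const ?_
      rw [Real.volume_Icc]
      exact ENNReal.ofReal_ne_top
    · exact measurableSet_Icc
    · exact hM
  have h2 : ∫ _x in Set.Icc a b, M = (b - a) * M := by
    rw [setIntegral_const, measureReal_def, Real.volume_Icc, ENNReal.toReal_ofReal (by linarith), smul_eq_mul]
  linarith

lemma gauss_pdf_eq (x : ℝ) :
    gaussianPDFReal 0 1 x = (Real.sqrt (2 * π))⁻¹ * Real.exp (-x ^ 2 / 2) := by
  rw [gaussianPDFReal]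
  norm_num

/-- small-ball condition: for `Z = (W + λ)²` with `W` standard Gaussian
and `λ ≥ 0`, for every `t > 0`, `P(Z ≤ t²(1+λ²)) ≤ 7^{1/4} t`. -/
theorem stmt_3 (lam t : ℝ) (hlam : 0 ≤ lam) (ht : 0 < t) :
    ((gaussianReal 0 1) {w | (w + lam) ^ 2 ≤ t ^ 2 * (1 + lam ^ 2)}).toReal
      ≤ (7 : ℝ) ^ ((1 : ℝ) / 4) * t := by
  obtain ⟨r, hr_def⟩ : ∃ r : ℝ, r = (7 : ℝ) ^ ((1 : ℝ) / 4) := ⟨_, rfl⟩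
  rw [← hr_def]
  have hrpos : 0 < r := hr_def ▸ Real.rpow_pos_of_pos (by norm_num) _
  have hr4 : r ^ 4 = 7 := by
    rw [hr_def, ← Real.rpow_natCast ((7:ℝ) ^ ((1:ℝ)/4)) 4,
      ← Real.rpow_mul (by norm_num : (0:ℝ) ≤ 7)]
    norm_num
  have hrlb : 1.6261 ≤ r := by
    by_contra h
    push_neg at h
    have h2 : r ^ 2 < 2.6442 := by
      nlinarith [mul_pos (by linarith : (0:ℝ) < 1.6261 - r) (by linarith : (0:ℝ) < 1.6261 + r)]
    have h4 : r ^ 4 < 7 := by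
      nlinarith [mul_pos (by linarith : (0:ℝ) < 2.6442 - r ^ 2)
        (by positivity : (0:ℝ) < 2.6442 + r ^ 2)]
    linarith
  have hrub : r ≤ 1.63 := by
    by_contra h
    push_neg at h
    have h2 : 2.6569 < r ^ 2 := by
      nlinarith [mul_pos (by linarith : (0:ℝ) < r - 1.63) (by linarith : (0:ℝ) < r + 1.63)]
    have h4 : (7:ℝ) < r ^ 4 := by
      nlinarith [mul_pos (by linarith : (0:ℝ) < r ^ 2 - 2.6569)
        (by positivity : (0:ℝ) < r ^ 2 + 2.6569)]
    linarith
  by_cases hA : 1 ≤ r * t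
  · -- trivial case: probability ≤ 1 ≤ r t
    have h1 : (gaussianReal 0 1) {w | (w + lam) ^ 2 ≤ t ^ 2 * (1 + lam ^ 2)} ≤ 1 :=
      prob_le_one
    have := ENNReal.toReal_mono ENNReal.one_ne_top h1
    simpa using this.trans hA
  · push_neg at hA
    have ht615 : t ≤ 0.615 := by nlinarith
    obtain ⟨s, hs_def⟩ : ∃ s : ℝ, s = Real.sqrt (1 + lam ^ 2) := ⟨_, rfl⟩
    have hs0 : 0 ≤ s := hs_def ▸ Real.sqrt_nonneg _
    have hs2 : s ^ 2 = 1 + lam ^ 2 := hs_def ▸ Real.sq_sqrt (by positivity)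
    have hs1 : 1 ≤ s := by nlinarith
    obtain ⟨c, hc_def⟩ : ∃ c : ℝ, c = t * s := ⟨_, rfl⟩
    have hc0 : 0 ≤ c := by rw [hc_def]; positivity
    have hc2 : c ^ 2 = t ^ 2 * (1 + lam ^ 2) := by rw [hc_def, mul_pow, hs2]
    have hSet : {w : ℝ | (w + lam) ^ 2 ≤ t ^ 2 * (1 + lam ^ 2)}
        = Set.Icc (-lam - c) (-lam + c) := by
      ext w
      simp only [Set.mem_setOf_eq, Set.mem_Icc]
      constructor
      · intro h
        constructor <;> nlinarith [sq_nonneg (w + lam + c), sq_nonneg (w + lam - c)]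
      · rintro ⟨h1, h2⟩
        nlinarith
    rw [hSet]
    obtain ⟨w, hw_def⟩ : ∃ w : ℝ, w = Real.sqrt (2 * π) := ⟨_, rfl⟩
    have hw : 0 < w := hw_def ▸ Real.sqrt_pos.2 (by positivity)
    have hw2 : w ^ 2 = 2 * π := hw_def ▸ Real.sq_sqrt (by positivity)
    have hpi : 3.1415 ≤ π := by linarith [Real.pi_gt_d6]

    have hlen : -lam + c - (-lam - c) = 2 * c := by ring
    by_cases hl17 : lam ≤ 1.7
    · -- use the constant bound on the density
      have hb := gauss_icc_bound (-lam - c) (-lam + c) w⁻¹ (by linarith) ?_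
      · rw [hlen] at hb
        refine hb.trans ?_
        have key : 2 * s ≤ r * w := by
          have h1 : (2 * s) ^ 2 ≤ (r * w) ^ 2 := by
            rw [mul_pow, mul_pow, hw2]
            nlinarith
          exact (pow_le_pow_iff_left₀ (by positivity) (by positivity) two_ne_zero).1 h1
        rw [mul_inv_le_iff₀ hw]
        nlinarith
      · intro x _
        rw [gauss_pdf_eq, ← hw_def]
        have h1 : Real.exp (-x ^ 2 / 2) ≤ 1 := Real.exp_le_one_iff.2 (by nlinarith [sq_nonneg x])
        exact mul_le_of_le_one_right (inv_nonneg.2 hw.le) h1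
    · push_neg at hl17
      obtain ⟨m, hm_def⟩ : ∃ m : ℝ, m = 0.385 * lam - 0.182 := ⟨_, rfl⟩
      have hm : 0.47 ≤ m := by rw [hm_def]; linarith
      have hsle : s ≤ lam + 0.295 := by
        have h1 : Real.sqrt (1 + lam ^ 2) ≤ Real.sqrt ((lam + 0.295) ^ 2) :=
          Real.sqrt_le_sqrt (by nlinarith)
        rw [Real.sqrt_sq (by linarith)] at h1
        linarith [hs_def ▸ h1]
      have hcm : -lam + c ≤ -m := by
        have h1 : c ≤ 0.615 * (lam + 0.295) := by nlinarith
        rw [hm_def]; linarith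
      obtain ⟨q, hq_def⟩ : ∃ q : ℝ, q = m ^ 2 := ⟨_, rfl⟩
      have hq0 : 0 ≤ q := hq_def ▸ sq_nonneg m
      have hb := gauss_icc_bound (-lam - c) (-lam + c) (w⁻¹ * Real.exp (-q / 2))
        (by linarith) ?_
      · rw [hlen] at hb
        refine hb.trans ?_
        have hE : 1 + q + q ^ 2 / 2 + q ^ 3 / 6 ≤ Real.exp q := by
          have h := Real.sum_le_exp_of_nonneg hq0 4
          norm_num [Finset.sum_range_succ, Nat.factorial] at h
          nlinarith [h]
        have hpoly : 4 * (1 + lam ^ 2) ≤ 16.61 * (1 + q + q ^ 2 / 2 + q ^ 3 / 6) := by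
          rw [hq_def, hm_def]
          nlinarith [sq_nonneg (lam - 2.7), sq_nonneg ((lam-2.7)*(lam-2.7)),
            sq_nonneg (lam*(lam-2.7)), sq_nonneg (lam*lam - 7), sq_nonneg lam,
            sq_nonneg ((lam-2.7)*(lam-2.7)*(lam-2.7))]
        have hconst : (16.61 : ℝ) ≤ r ^ 2 * (2 * π) := by nlinarith
        have h4 : 4 * (1 + lam ^ 2) ≤ r ^ 2 * (2 * π) * Real.exp q := by
          have hT0 : (0:ℝ) ≤ 1 + q + q ^ 2 / 2 + q ^ 3 / 6 := by positivity
          nlinarith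
        have hexp2 : Real.exp (-q / 2) ^ 2 = Real.exp (-q) := by
          rw [sq, ← Real.exp_add]; ring_nf
        have hprod : Real.exp q * Real.exp (-q) = 1 := by
          rw [← Real.exp_add]; simp
        have key : 2 * s * Real.exp (-q / 2) ≤ r * w := by
          have h1 : (2 * s * Real.exp (-q / 2)) ^ 2 ≤ (r * w) ^ 2 := by
            rw [show (2 * s * Real.exp (-q / 2)) ^ 2
                = 4 * s ^ 2 * Real.exp (-q / 2) ^ 2 by ring, mul_pow, hw2, hexp2, hs2]
            nlinarith [mul_le_mul_of_nonneg_right h4 (Real.exp_pos (-q)).le, hprod,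
              Real.exp_pos (-q), Real.exp_pos q]
          exact (pow_le_pow_iff_left₀ (by positivity) (by positivity) two_ne_zero).1 h1
        rw [show 2 * c * (w⁻¹ * Real.exp (-q / 2)) = 2 * c * Real.exp (-q / 2) * w⁻¹ by ring,
          mul_inv_le_iff₀ hw]
        have h6 : 2 * c * Real.exp (-q / 2) = t * (2 * s * Real.exp (-q / 2)) := by
          rw [hc_def]; ring
        rw [h6]
        calc t * (2 * s * Real.exp (-q / 2)) ≤ t * (r * w) :=
              mul_le_mul_of_nonneg_left key ht.le
          _ = r * t * w := by ring
      · intro x hx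
        obtain ⟨_, hx2⟩ := hx
        rw [gauss_pdf_eq, ← hw_def]
        have hxm : x ≤ -m := le_trans hx2 hcm
        have hx2m : m ^ 2 ≤ x ^ 2 := by
          nlinarith [mul_nonneg (by linarith : (0:ℝ) ≤ -x - m) (by linarith : (0:ℝ) ≤ -x + m)]
        have h5 : Real.exp (-x ^ 2 / 2) ≤ Real.exp (-q / 2) := by
          rw [hq_def]
          exact Real.exp_le_exp.2 (by nlinarith [hx2m])
        exact mul_le_mul_of_nonneg_left h5 (inv_nonneg.2 hw.le)
end

section
/- Let Y = ⟨β, X⟩ with X ~ N(μ, σ_X² I_d) conditional on sensitive attribute taking value s (with β = β_s, μ = μ_s). Then the conditional CDF of Y given S = s is F(t) = Φ((t − ⟨β_s, μ_s⟩)/(σ_X‖β_s‖)) and its inverse is F^{-1}(p) = σ_X‖β_s‖·Φ^{-1}(p) + ⟨β_s, μ_s⟩, where Φ is the standard normal CDF. Consequently, the composition (Σ_{s'} p_{s'} F_{s'}^{-1}) ∘ F_s applied to ⟨β_s, x⟩ equals (Σ_{s'} p_{s'}‖β_{s'}‖)·⟨β_s/‖β_s‖, x − μ_s⟩ + Σ_{s'}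 p_{s'}⟨β_{s'}, μ_{s'}⟩. -/
open MeasureTheory ProbabilityTheory
open scoped RealInnerProductSpace

/-- The standard normal CDF `Φ`. -/
noncomputable def stdGaussCDF (t : ℝ) : ℝ := ((gaussianReal 0 1) (Set.Iic t)).toReal

/-- The (generalized) inverse standard normal CDF `Φ⁻¹`. -/
noncomputable def stdGaussCDFInv (p : ℝ) : ℝ := sInf {y | p ≤ stdGaussCDF y}


set_option maxHeartbeats 1000000
open Real Filter Set
open scoped NNReal ENNReal Topology


lemma pdf_conv_aux (m1 m2 a b z y : ℝ) (ha : 0 < a) (hb : 0 < b) :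
    gaussianPDFReal m1 (NNReal.mk a ha.le) (z - y) * gaussianPDFReal m2 (NNReal.mk b hb.le) y
      = gaussianPDFReal (m1 + m2) (NNReal.mk (a + b) (by positivity)) z *
        gaussianPDFReal ((b * (z - m1) + a * m2) / (a + b)) (NNReal.mk (a * b / (a + b)) (by positivity)) y := by
  simp only [gaussianPDFReal_def, NNReal.coe_mk]
  have hab : 0 < a + b := by linarith
  have h2pi : (0:ℝ) < 2 * π := by positivity
  have hs : Real.sqrt (2 * π * a) * Real.sqrt (2 * π * b)
      = Real.sqrt (2 * π * (a + b)) * Real.sqrt (2 * π * (a * b / (a + b))) := by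
    rw [← Real.sqrt_mul (by positivity), ← Real.sqrt_mul (by positivity)]
    congr 1
    field_simp
  have he : rexp (-(z - y - m1) ^ 2 / (2 * a)) * rexp (-(y - m2) ^ 2 / (2 * b))
      = rexp (-(z - (m1 + m2)) ^ 2 / (2 * (a + b))) *
        rexp (-(y - (b * (z - m1) + a * m2) / (a + b)) ^ 2 / (2 * (a * b / (a + b)))) := by
    rw [← Real.exp_add, ← Real.exp_add]
    congr 1
    field_simp
    ring
  have hs1 : (0:ℝ) < Real.sqrt (2 * π * a) := Real.sqrt_pos.2 (by positivity)
  have hs2 : (0:ℝ) < Real.sqrt (2 * π * b) := Real.sqrt_pos.2 (by positivity)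
  have hs3 : (0:ℝ) < Real.sqrt (2 * π * (a + b)) := Real.sqrt_pos.2 (by positivity)
  have hs4 : (0:ℝ) < Real.sqrt (2 * π * (a * b / (a + b))) := Real.sqrt_pos.2 (by positivity)
  calc (Real.sqrt (2 * π * a))⁻¹ * rexp (-(z - y - m1) ^ 2 / (2 * a)) *
        ((Real.sqrt (2 * π * b))⁻¹ * rexp (-(y - m2) ^ 2 / (2 * b)))
      = (Real.sqrt (2 * π * a) * Real.sqrt (2 * π * b))⁻¹ *
        (rexp (-(z - y - m1) ^ 2 / (2 * a)) * rexp (-(y - m2) ^ 2 / (2 * b))) := by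
        rw [mul_inv]; ring
    _ = (Real.sqrt (2 * π * (a + b)) * Real.sqrt (2 * π * (a * b / (a + b))))⁻¹ *
        (rexp (-(z - (m1 + m2)) ^ 2 / (2 * (a + b))) *
          rexp (-(y - (b * (z - m1) + a * m2) / (a + b)) ^ 2 / (2 * (a * b / (a + b))))) := by
        rw [hs, he]
    _ = _ := by rw [mul_inv]; ring

lemma gaussianReal_conv (m1 m2 : ℝ) (v1 v2 : ℝ≥0) :
    Measure.conv (gaussianReal m1 v1) (gaussianReal m2 v2) = gaussianReal (m1 + m2) (v1 + v2) := by
  rcases eq_or_ne v1 0 with rfl | h1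
  · rw [gaussianReal_zero_var, Measure.conv, Measure.dirac_prod,
      Measure.map_map measurable_add measurable_prodMk_left]
    have hc : ((fun p : ℝ × ℝ => p.1 + p.2) ∘ Prod.mk m1) = (fun x => m1 + x) := rfl
    rw [hc, gaussianReal_map_const_add, zero_add, add_comm m2 m1]
  rcases eq_or_ne v2 0 with rfl | h2
  · rw [gaussianReal_zero_var, Measure.conv, Measure.prod_dirac,
      Measure.map_map measurable_add measurable_prodMk_right]
    have hc : ((fun p : ℝ × ℝ => p.1 + p.2) ∘ (fun x => (x, m2))) = (fun x => x + m2) := rfl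
    rw [hc, gaussianReal_map_add_const, add_zero]
  have h12 : v1 + v2 ≠ 0 := fun h => h1 (by simpa using (add_eq_zero.mp h).1)
  ext s hs
  have ha : (0:ℝ) < v1 := lt_of_le_of_ne v1.coe_nonneg (by exact_mod_cast h1.symm)
  have hb : (0:ℝ) < v2 := lt_of_le_of_ne v2.coe_nonneg (by exact_mod_cast h2.symm)
  rw [Measure.conv, Measure.map_apply (by fun_prop) hs,
    Measure.prod_apply (measurable_add hs)]
  have step1 : ∀ x : ℝ, (gaussianReal m2 v2) (Prod.mk x ⁻¹' ((fun p : ℝ × ℝ => p.1 + p.2) ⁻¹' s))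
      = ∫⁻ z in s, gaussianPDF m2 v2 (z - x) := by
    intro x
    have hpre : (Prod.mk x ⁻¹' ((fun p : ℝ × ℝ => p.1 + p.2) ⁻¹' s)) = (fun y => x + y) ⁻¹' s := rfl
    rw [hpre, gaussianReal_apply _ h2]
    have hmp : MeasurePreserving (fun y : ℝ => x + y) volume volume :=
      measurePreserving_add_left volume x
    have := hmp.setLIntegral_comp_preimage_emb (measurableEmbedding_addLeft x)
      (fun z => gaussianPDF m2 v2 (z - x)) s
    simpa using this
  simp_rw [step1]
  have hmes : Measurable fun x => ∫⁻ z in s, gaussianPDF m2 v2 (z - x) := by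
    apply Measurable.lintegral_prod_right (f := fun x z => gaussianPDF m2 v2 (z - x))
    exact (measurable_gaussianPDF _ _).comp (measurable_snd.sub measurable_fst)
  rw [gaussianReal_of_var_ne_zero _ h1,
    lintegral_withDensity_eq_lintegral_mul _ (measurable_gaussianPDF _ _) hmes]
  simp only [Pi.mul_apply]
  have step2 : ∀ x, gaussianPDF m1 v1 x * ∫⁻ z in s, gaussianPDF m2 v2 (z - x)
      = ∫⁻ z in s, gaussianPDF m1 v1 x * gaussianPDF m2 v2 (z - x) := by
    intro x
    rw [lintegral_const_mul _ (show Measurable fun z : ℝ => gaussianPDF m2 v2 (z - x) from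
      (measurable_gaussianPDF _ _).comp (measurable_id.sub_const x))]
  simp_rw [step2]
  rw [lintegral_lintegral_swap (Measurable.aemeasurable (by
    exact ((measurable_gaussianPDF _ _).comp measurable_fst).mul
      ((measurable_gaussianPDF _ _).comp (measurable_snd.sub measurable_fst))))]
  rw [gaussianReal_apply _ h12]
  refine setLIntegral_congr_fun hs (fun z _ => ?_)
  have key : ∀ x, gaussianPDF m1 v1 x * gaussianPDF m2 v2 (z - x)
      = gaussianPDF (m1+m2) (v1+v2) z *
        gaussianPDF (((v1:ℝ) * (z - m2) + (v2:ℝ) * m1) / ((v2:ℝ) + (v1:ℝ)))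
          (NNReal.mk ((v2:ℝ) * v1 / ((v2:ℝ) + (v1:ℝ))) (by positivity)) x := by
    intro x
    rw [gaussianPDF, gaussianPDF, gaussianPDF, gaussianPDF,
      ← ENNReal.ofReal_mul (gaussianPDFReal_nonneg _ _ _),
      ← ENNReal.ofReal_mul (gaussianPDFReal_nonneg _ _ _)]
    congr 1
    have := pdf_conv_aux m2 m1 (v2:ℝ) (v1:ℝ) z x hb ha
    have hv1 : NNReal.mk (v1:ℝ) ha.le = v1 := rfl
    have hv2 : NNReal.mk (v2:ℝ) hb.le = v2 := rfl
    rw [hv1, hv2] at this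
    rw [mul_comm, this]
    congr 2
    case _ => ring
    case _ => exact NNReal.eq (by rw [NNReal.coe_mk, NNReal.coe_add]; ring)
  simp_rw [key]
  rw [lintegral_const_mul _ (measurable_gaussianPDF _ _),
    lintegral_gaussianPDF_eq_one _ (by
      rw [ne_eq, ← NNReal.coe_eq_zero, NNReal.coe_mk]
      exact (div_pos (mul_pos hb ha) (by linarith)).ne'), mul_one]

lemma map_pi_gauss (σ2 : ℝ≥0) : ∀ (n : ℕ) (c m : Fin n → ℝ),
    Measure.map (fun x : Fin n → ℝ => ∑ i, c i * x i)
        (Measure.pi fun i => gaussianReal (m i) σ2)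
      = gaussianReal (∑ i, c i * m i) (NNReal.mk (∑ i, (c i)^2) (by positivity) * σ2) := by
  intro n
  induction n with
  | zero =>
      intro c m
      simp only [Finset.univ_eq_empty, Finset.sum_empty]
      have h0 : NNReal.mk (0:ℝ) (by positivity) = 0 := rfl
      rw [Measure.map_const]
      simp [h0, gaussianReal_zero_var]
  | succ n ih =>
      intro c m
      have hmp := (measurePreserving_piFinSuccAbove
        (fun i : Fin (n+1) => gaussianReal (m i) σ2) 0)
      simp only [Fin.zero_succAbove] at hmp
      have hmap : Measure.map (fun x : Fin (n+1) → ℝ => ∑ i, c i * x i)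
          (Measure.pi fun i => gaussianReal (m i) σ2)
          = Measure.map (fun p : ℝ × (Fin n → ℝ) => c 0 * p.1 + ∑ i, c i.succ * p.2 i)
            ((gaussianReal (m 0) σ2).prod
              (Measure.pi fun i : Fin n => gaussianReal (m i.succ) σ2)) := by
        rw [← hmp.map_eq, Measure.map_map (by fun_prop) (MeasurableEquiv.measurable _)]
        congr 1
        ext x
        simp only [Function.comp_apply, MeasurableEquiv.piFinSuccAbove,
          MeasurableEquiv.coe_mk, MeasurableEquiv.piFinSuccAbove_apply]
        rw [Fin.sum_univ_succ]
        congr 1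
      have hsplit : (fun p : ℝ × (Fin n → ℝ) => c 0 * p.1 + ∑ i, c i.succ * p.2 i)
          = (fun q : ℝ × ℝ => q.1 + q.2) ∘
            (Prod.map (fun x : ℝ => c 0 * x) (fun y : Fin n → ℝ => ∑ i, c i.succ * y i)) := rfl
      rw [hmap, hsplit, ← Measure.map_map measurable_add (by fun_prop),
        ← Measure.map_prod_map _ _ (by fun_prop) (by fun_prop),
        gaussianReal_map_const_mul, ih, ← Measure.conv, gaussianReal_conv]
      congr 1
      · rw [Fin.sum_univ_succ]
      · refine NNReal.eq ?_
        push_cast [NNReal.coe_mk, Fin.sum_univ_succ]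
        ring

lemma stdGaussCDF_eq_cdf (t : ℝ) : stdGaussCDF t = cdf (gaussianReal 0 1) t :=
  (cdf_eq_real _ t).symm

lemma continuous_gaussianPDFReal (m : ℝ) (v : ℝ≥0) : Continuous (gaussianPDFReal m v) := by
  unfold gaussianPDFReal
  fun_prop

lemma stdGaussCDF_sub {a b : ℝ} (hab : a ≤ b) :
    stdGaussCDF b - stdGaussCDF a = ∫ x in Set.Ioc a b, gaussianPDFReal 0 1 x := by
  have h1 : (1 : ℝ≥0) ≠ 0 := one_ne_zero
  have hunion : Set.Iic a ∪ Set.Ioc a b = Set.Iic b := Set.Iic_union_Ioc_eq_Iic hab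
  have hdisj : Disjoint (Set.Iic a) (Set.Ioc a b) := by
    rw [Set.disjoint_left]
    rintro x hx ⟨h1', _⟩
    exact absurd (show a < a from lt_of_lt_of_le h1' hx) (lt_irrefl a)
  have hu := measure_union (μ := gaussianReal 0 1) hdisj measurableSet_Ioc
  rw [hunion] at hu
  rw [stdGaussCDF, stdGaussCDF, hu, ENNReal.toReal_add (measure_ne_top _ _) (measure_ne_top _ _),
    gaussianReal_apply_eq_integral _ h1 (Set.Ioc a b),
    ENNReal.toReal_ofReal (setIntegral_nonneg measurableSet_Ioc
      (fun x _ => gaussianPDFReal_nonneg _ _ _))]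
  ring

lemma stdGaussCDF_strictMono : StrictMono stdGaussCDF := by
  intro a b hab
  have h : 0 < stdGaussCDF b - stdGaussCDF a := by
    rw [stdGaussCDF_sub hab.le]
    have : ∫ x in Set.Ioc a b, gaussianPDFReal 0 1 x = ∫ x in a..b, gaussianPDFReal 0 1 x := by
      rw [intervalIntegral.integral_of_le hab.le]
    rw [this]
    apply intervalIntegral.intervalIntegral_pos_of_pos ((integrable_gaussianPDFReal 0 1).intervalIntegrable)
    · exact fun x => gaussianPDFReal_pos _ _ x one_ne_zero
    · exact hab
  linarith

lemma stdGaussCDF_mono : Monotone stdGaussCDF := stdGaussCDF_strictMono.monotone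

lemma stdGaussCDF_continuous : Continuous stdGaussCDF := by
  have hC : ∀ x, gaussianPDFReal 0 1 x ≤ (Real.sqrt (2 * π))⁻¹ := by
    intro x
    rw [gaussianPDFReal_def]
    have h1 : rexp (-(x - 0) ^ 2 / (2 * (1:ℝ≥0))) ≤ 1 := by
      rw [Real.exp_le_one_iff]
      push_cast
      nlinarith [sq_nonneg (x - 0)]
    have h2 : (0:ℝ) < (Real.sqrt (2 * π * 1))⁻¹ := by
      rw [inv_pos]
      exact Real.sqrt_pos.2 (by positivity)
    calc (Real.sqrt (2 * π * (1:ℝ≥0)))⁻¹ * rexp (-(x - 0) ^ 2 / (2 * (1:ℝ≥0)))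
        ≤ (Real.sqrt (2 * π * (1:ℝ≥0)))⁻¹ * 1 := by
          apply mul_le_mul_of_nonneg_left _ (le_of_lt (by push_cast at h2 ⊢; simpa using h2))
          push_cast at h1 ⊢
          simpa using h1
      _ = (Real.sqrt (2 * π))⁻¹ := by push_cast; rw [mul_one, mul_one]
  have key : ∀ a b : ℝ, a ≤ b → stdGaussCDF b - stdGaussCDF a ≤ (Real.sqrt (2 * π))⁻¹ * (b - a) := by
    intro a b hab
    rw [stdGaussCDF_sub hab]
    calc ∫ x in Set.Ioc a b, gaussianPDFReal 0 1 x
        ≤ ∫ _ in Set.Ioc a b, (Real.sqrt (2 * π))⁻¹ := by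
          apply setIntegral_mono_on ((integrable_gaussianPDFReal 0 1).restrict)
            (integrableOn_const measure_Ioc_lt_top.ne) measurableSet_Ioc
          exact fun x _ => hC x
      _ = (Real.sqrt (2 * π))⁻¹ * (b - a) := by
          rw [setIntegral_const, Real.volume_real_Ioc_of_le hab,
            smul_eq_mul]
          ring
  have hL : LipschitzWith (NNReal.mk (Real.sqrt (2 * π))⁻¹ (by positivity)) stdGaussCDF := by
    apply LipschitzWith.of_dist_le_mul
    intro x y
    rcases le_total x y with h | h
    · rw [Real.dist_eq, Real.dist_eq, abs_of_nonpos (by have := stdGaussCDF_mono h; linarith),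
        abs_of_nonpos (by linarith)]
      have := key x y h
      simp only [NNReal.coe_mk]
      linarith
    · rw [Real.dist_eq, Real.dist_eq, abs_of_nonneg (by have := stdGaussCDF_mono h; linarith),
        abs_of_nonneg (by linarith)]
      have := key y x h
      simp only [NNReal.coe_mk]
      linarith
  exact hL.continuous

lemma stdGaussCDF_nonneg (t : ℝ) : 0 ≤ stdGaussCDF t := ENNReal.toReal_nonneg

lemma stdGaussCDF_le_one (t : ℝ) : stdGaussCDF t ≤ 1 := by
  rw [stdGaussCDF_eq_cdf]; exact cdf_le_one _ _

lemma stdGaussCDF_pos (t : ℝ) : 0 < stdGaussCDF t :=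
  lt_of_le_of_lt (stdGaussCDF_nonneg (t - 1)) (stdGaussCDF_strictMono (by linarith))

lemma stdGaussCDF_lt_one (t : ℝ) : stdGaussCDF t < 1 :=
  lt_of_lt_of_le (stdGaussCDF_strictMono (show t < t + 1 by linarith)) (stdGaussCDF_le_one (t + 1))

lemma stdGaussCDF_tendsto_atBot : Tendsto stdGaussCDF atBot (𝓝 0) := by
  have : stdGaussCDF = fun t => cdf (gaussianReal 0 1) t := funext stdGaussCDF_eq_cdf
  rw [this]; exact tendsto_cdf_atBot _
lemma stdGaussCDF_tendsto_atTop : Tendsto stdGaussCDF atTop (𝓝 1) := by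
  have : stdGaussCDF = fun t => cdf (gaussianReal 0 1) t := funext stdGaussCDF_eq_cdf
  rw [this]; exact tendsto_cdf_atTop _

lemma stdGaussCDF_surj {q : ℝ} (hq : q ∈ Set.Ioo (0:ℝ) 1) : ∃ z, stdGaussCDF z = q := by
  obtain ⟨a, ha⟩ := (stdGaussCDF_tendsto_atBot.eventually_lt_const hq.1).exists
  obtain ⟨b, hb⟩ := (stdGaussCDF_tendsto_atTop.eventually_const_lt hq.2).exists
  have hab : a ≤ b := by
    by_contra h
    push_neg at h
    exact absurd (stdGaussCDF_strictMono h) (by linarith)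
  obtain ⟨z, _, hz⟩ := intermediate_value_Icc hab stdGaussCDF_continuous.continuousOn
    ⟨ha.le, hb.le⟩
  exact ⟨z, hz⟩

lemma setOf_le_stdGaussCDF {z : ℝ} : {y | stdGaussCDF z ≤ stdGaussCDF y} = Set.Ici z := by
  ext y
  simp only [Set.mem_setOf_eq, Set.mem_Ici]
  exact stdGaussCDF_strictMono.le_iff_le

lemma stdGaussCDFInv_stdGaussCDF (z : ℝ) : stdGaussCDFInv (stdGaussCDF z) = z := by
  rw [stdGaussCDFInv, setOf_le_stdGaussCDF, csInf_Ici]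

lemma stdGaussCDF_stdGaussCDFInv {q : ℝ} (hq : q ∈ Set.Ioo (0:ℝ) 1) :
    stdGaussCDF (stdGaussCDFInv q) = q := by
  obtain ⟨z, hz⟩ := stdGaussCDF_surj hq
  rw [← hz, stdGaussCDFInv_stdGaussCDF]

lemma setOf_le_stdGaussCDF' {q : ℝ} (hq : q ∈ Set.Ioo (0:ℝ) 1) :
    {y | q ≤ stdGaussCDF y} = Set.Ici (stdGaussCDFInv q) := by
  obtain ⟨z, hz⟩ := stdGaussCDF_surj hq
  rw [← hz, stdGaussCDFInv_stdGaussCDF, setOf_le_stdGaussCDF]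


/-- in the linear Gaussian model `Y = ⟨β_s, X⟩`, `X ~ N(μ_s, σ²I)`
conditional on `S = s`: the conditional CDF is
`F_s(t) = Φ((t - ⟨β_s,μ_s⟩)/(σ‖β_s‖))`, its (generalized) inverse is
`F_s⁻¹(p) = σ‖β_s‖Φ⁻¹(p) + ⟨β_s,μ_s⟩`, and consequently
`(Σ_{s'} p_{s'} F_{s'}⁻¹) ∘ F_s(⟨β_s,x⟩)
  = (Σ_{s'} p_{s'}‖β_{s'}‖)⟨β_s/‖β_s‖, x - μ_s⟩ + Σ_{s'} p_{s'}⟨β_{s'},μ_{s'}⟩`. -/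
theorem stmt_19 {d M : ℕ} (σ : ℝ) (hσ : 0 < σ)
    (β μ : Fin M → EuclideanSpace ℝ (Fin d)) (hβ : ∀ s, β s ≠ 0)
    (p : Fin M → ℝ) (hp : ∀ s, 0 ≤ p s) (hps : ∑ s, p s = 1)
    (P : Fin M → Measure (EuclideanSpace ℝ (Fin d)))
    (hP : ∀ s, P s = (Measure.pi fun i => gaussianReal (μ s i) ⟨σ ^ 2, sq_nonneg σ⟩).map
      (EuclideanSpace.equiv (Fin d) ℝ).symm)
    (F : Fin M → ℝ → ℝ) (hF : ∀ s t, F s t = ((P s) {x | ⟪β s, x⟫ ≤ t}).toReal)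
    (Finv : Fin M → ℝ → ℝ) (hFinv : ∀ s q, Finv s q = sInf {y | q ≤ F s y}) :
    (∀ s t, F s t = stdGaussCDF ((t - ⟪β s, μ s⟫) / (σ * ‖β s‖)))
    ∧ (∀ s, ∀ q ∈ Set.Ioo (0 : ℝ) 1,
        Finv s q = σ * ‖β s‖ * stdGaussCDFInv q + ⟪β s, μ s⟫)
    ∧ (∀ s x, (∑ s', p s' * Finv s' (F s ⟪β s, x⟫))
        = (∑ s', p s' * ‖β s'‖) * (⟪β s, x - μ s⟫ / ‖β s‖)
            + ∑ s', p s' * ⟪β s', μ s'⟫) := by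
  have hnβ : ∀ s, (0:ℝ) < ‖β s‖ := fun s => norm_pos_iff.2 (hβ s)
  have hc : ∀ s, (0:ℝ) < σ * ‖β s‖ := fun s => mul_pos hσ (hnβ s)
  have hmeasI : ∀ s, Measurable fun x : EuclideanSpace ℝ (Fin d) => ⟪β s, x⟫ :=
    fun s => (Continuous.inner continuous_const continuous_id).measurable
  have hmapP : ∀ s, Measure.map (fun x : EuclideanSpace ℝ (Fin d) => ⟪β s, x⟫) (P s)
      = gaussianReal ⟪β s, μ s⟫ (NNReal.mk ((σ * ‖β s‖)^2) (sq_nonneg _)) := by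
    intro s
    rw [hP s, Measure.map_map (hmeasI s)
      (EuclideanSpace.equiv (Fin d) ℝ).symm.continuous.measurable]
    have hcomp : ((fun x : EuclideanSpace ℝ (Fin d) => ⟪β s, x⟫) ∘
        ⇑(EuclideanSpace.equiv (Fin d) ℝ).symm) = fun x : Fin d → ℝ => ∑ i, β s i * x i := by
      funext x
      simp only [Function.comp_apply]
      rw [PiLp.inner_apply]
      simp [RCLike.inner_apply]
      exact Finset.sum_congr rfl fun i _ => mul_comm _ _
    rw [hcomp]
    refine (map_pi_gauss (NNReal.mk (σ ^ 2) (sq_nonneg σ)) d _ _).trans ?_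
    refine congrArg₂ gaussianReal ?_ ?_
    · rw [PiLp.inner_apply]
      simp [RCLike.inner_apply]
      exact Finset.sum_congr rfl fun i _ => mul_comm _ _
    · refine NNReal.eq ?_
      rw [NNReal.coe_mul, NNReal.coe_mk, NNReal.coe_mk, NNReal.coe_mk]
      have hn : ‖β s‖ ^ 2 = ∑ i, (β s i)^2 := by
        rw [EuclideanSpace.norm_eq, Real.sq_sqrt (by positivity)]
        congr 1
        funext i
        rw [Real.norm_eq_abs, sq_abs]
      rw [mul_pow, hn]
      ring
  have hVne : ∀ s, ((NNReal.mk ((σ * ‖β s‖)^2) (sq_nonneg _)) : ℝ≥0) ≠ 0 := by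
    intro s
    rw [ne_eq, ← NNReal.coe_eq_zero, NNReal.coe_mk]
    exact pow_ne_zero 2 (hc s).ne'
  -- the affine representation of the gaussian
  have hgm : ∀ s, gaussianReal ⟪β s, μ s⟫ (NNReal.mk ((σ * ‖β s‖)^2) (sq_nonneg _))
      = Measure.map (fun z => σ * ‖β s‖ * z + ⟪β s, μ s⟫) (gaussianReal 0 1) := by
    intro s
    have h1 : Measure.map (fun z : ℝ => σ * ‖β s‖ * z) (gaussianReal 0 1)
        = gaussianReal 0 ((NNReal.mk ((σ * ‖β s‖)^2) (sq_nonneg _)) * 1) := by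
      have := gaussianReal_map_const_mul (μ := 0) (v := 1) (σ * ‖β s‖)
      simpa using this
    have h2 : (fun z : ℝ => σ * ‖β s‖ * z + ⟪β s, μ s⟫)
        = (fun z => z + ⟪β s, μ s⟫) ∘ (fun z : ℝ => σ * ‖β s‖ * z) := rfl
    rw [h2, ← Measure.map_map (by fun_prop) (by fun_prop), h1, mul_one,
      gaussianReal_map_add_const, zero_add]
  have key1 : ∀ s t, F s t = stdGaussCDF ((t - ⟪β s, μ s⟫) / (σ * ‖β s‖)) := by
    intro s t
    rw [hF]
    have hset : {x : EuclideanSpace ℝ (Fin d) | ⟪β s, x⟫ ≤ t}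
        = (fun x => ⟪β s, x⟫) ⁻¹' (Set.Iic t) := rfl
    rw [hset, ← Measure.map_apply (hmeasI s) measurableSet_Iic, hmapP s, hgm s,
      Measure.map_apply (by fun_prop) measurableSet_Iic]
    have hpre : (fun z : ℝ => σ * ‖β s‖ * z + ⟪β s, μ s⟫) ⁻¹' (Set.Iic t)
        = Set.Iic ((t - ⟪β s, μ s⟫) / (σ * ‖β s‖)) := by
      ext z
      simp only [Set.mem_preimage, Set.mem_Iic]
      rw [le_div_iff₀ (hc s)]
      constructor <;> intro h <;> nlinarith [hc s]
    rw [hpre, stdGaussCDF]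
  have key2 : ∀ s, ∀ q ∈ Set.Ioo (0:ℝ) 1,
      Finv s q = σ * ‖β s‖ * stdGaussCDFInv q + ⟪β s, μ s⟫ := by
    intro s q hq
    rw [hFinv]
    have hset : {y | q ≤ F s y} = Set.Ici (σ * ‖β s‖ * stdGaussCDFInv q + ⟪β s, μ s⟫) := by
      ext y
      simp only [Set.mem_setOf_eq, Set.mem_Ici, key1 s y]
      have : q ≤ stdGaussCDF ((y - ⟪β s, μ s⟫) / (σ * ‖β s‖))
          ↔ (y - ⟪β s, μ s⟫) / (σ * ‖β s‖) ∈ Set.Ici (stdGaussCDFInv q) := by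
        rw [← setOf_le_stdGaussCDF' hq]; rfl
      rw [this, Set.mem_Ici, le_div_iff₀ (hc s)]
      constructor <;> intro h <;> nlinarith [hc s]
    rw [hset, csInf_Ici]
  refine ⟨key1, key2, ?_⟩
  intro s x
  set z := (⟪β s, x⟫ - ⟪β s, μ s⟫) / (σ * ‖β s‖) with hz
  have hFz : F s ⟪β s, x⟫ = stdGaussCDF z := key1 s _
  have hmem : stdGaussCDF z ∈ Set.Ioo (0:ℝ) 1 := ⟨stdGaussCDF_pos z, stdGaussCDF_lt_one z⟩
  have hterm : ∀ s', Finv s' (F s ⟪β s, x⟫) = σ * ‖β s'‖ * z + ⟪β s', μ s'⟫ := by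
    intro s'
    rw [hFz, key2 s' _ hmem, stdGaussCDFInv_stdGaussCDF]
  simp_rw [hterm]
  have hσz : σ * z = ⟪β s, x - μ s⟫ / ‖β s‖ := by
    rw [hz, inner_sub_right, mul_div_assoc']
    exact mul_div_mul_left _ _ hσ.ne'
  calc ∑ s', p s' * (σ * ‖β s'‖ * z + ⟪β s', μ s'⟫)
      = ∑ s', (p s' * ‖β s'‖ * (σ * z) + p s' * ⟪β s', μ s'⟫) := by
        refine Finset.sum_congr rfl fun s' _ => by ring
    _ = (∑ s', p s' * ‖β s'‖) * (σ * z) + ∑ s', p s' * ⟪β s', μ s'⟫ := by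
        rw [Finset.sum_add_distrib, ← Finset.sum_mul]
    _ = _ := by rw [hσz]
end
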